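/- Let ν be a Lévy measure with tail ν̄, let T > 0 and f : [0,T] → ℝ. Suppose t₀ ∈ (0,T] is a maximum point of f on [0,T], that f is absolutely continuous on [0,t₀] with a.e. derivative f′ ∈ L¹(0,t₀), and that f is continuously differentiable on (0,t₀]. Then ∫_0^{t₀} ν̄(t₀−s) f′(s) ds ≥ 0, i.e. the non-local derivative of f at t₀ is non-negative. -/

import Mathlib

open MeasureTheory Set
open scoped ENNReal NNReal

/-- The tail of a Lévy measure: `ν̄(s) = ν((s,∞))`. -/
noncomputable def nubar (ν : Measure ℝ) (s : ℝ) : ℝ := (ν (Set.Ioi s)).toReal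

/-- A Lévy measure on `(0,∞)`: it gives no mass to `(-∞,0]` and integrates `min(s,1)`. -/
def IsLevyMeasure (ν : Measure ℝ) : Prop :=
  ν (Set.Iic 0) = 0 ∧ ∫⁻ s in Set.Ioi (0:ℝ), ENNReal.ofReal (min s 1) ∂ν ≠ ⊤

lemma levy_tail_lt_top {ν : Measure ℝ} (hν : IsLevyMeasure ν) {ε : ℝ} (hε : 0 < ε) :
    ν (Set.Ioi ε) < ⊤ := by
  have key : ENNReal.ofReal (min ε 1) * ν (Set.Ioi ε)
      ≤ ∫⁻ s in Set.Ioi (0:ℝ), ENNReal.ofReal (min s 1) ∂ν := by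
    calc ENNReal.ofReal (min ε 1) * ν (Set.Ioi ε)
        = ∫⁻ _ in Set.Ioi ε, ENNReal.ofReal (min ε 1) ∂ν := by
          rw [setLIntegral_const]
      _ ≤ ∫⁻ s in Set.Ioi ε, ENNReal.ofReal (min s 1) ∂ν := by
          refine setLIntegral_mono (by measurability) ?_
          intro x hx
          exact ENNReal.ofReal_le_ofReal (min_le_min (le_of_lt hx) le_rfl)
      _ ≤ ∫⁻ s in Set.Ioi (0:ℝ), ENNReal.ofReal (min s 1) ∂ν :=
          lintegral_mono_set (Set.Ioi_subset_Ioi hε.le)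
  have hc : ENNReal.ofReal (min ε 1) ≠ 0 := by
    simp [ENNReal.ofReal_eq_zero, not_le, lt_min_iff, hε]
  by_contra h
  push_neg at h
  rw [top_le_iff.mp h, ENNReal.mul_top hc] at key
  exact hν.2 (top_le_iff.mp key)

lemma levy_sigmaFinite {ν : Measure ℝ} (hν : IsLevyMeasure ν) : SigmaFinite ν := by
  refine Measure.FiniteSpanningSetsIn.sigmaFinite
    (C := Set.univ) ⟨fun n => Set.Ioi (1/(n+1) : ℝ) ∪ Set.Iic 0, fun n => Set.mem_univ _,
      ?_, ?_⟩
  · intro n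
    refine lt_of_le_of_lt (measure_union_le _ _) ?_
    rw [hν.1, add_zero]
    exact levy_tail_lt_top hν (by positivity)
  · ext x
    simp only [Set.mem_iUnion, Set.mem_union, Set.mem_Ioi, Set.mem_Iic, Set.mem_univ, iff_true]
    rcases le_or_gt x 0 with hx | hx
    · exact ⟨0, Or.inr hx⟩
    · obtain ⟨n, hn⟩ := exists_nat_one_div_lt hx
      exact ⟨n, Or.inl hn⟩

theorem stmt_2 (ν : Measure ℝ) (hν : IsLevyMeasure ν)
    (T : ℝ) (hT : 0 < T) (f f' : ℝ → ℝ) (t₀ : ℝ)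
    (ht₀ : t₀ ∈ Set.Ioc (0:ℝ) T)
    (hmax : ∀ t ∈ Set.Icc (0:ℝ) T, f t ≤ f t₀)
    (hf'int : MeasureTheory.IntegrableOn f' (Set.Icc 0 t₀))
    (hfAC : ∀ t ∈ Set.Icc (0:ℝ) t₀, f t = f 0 + ∫ s in (0:ℝ)..t, f' s)
    (hC1 : ∀ t ∈ Set.Ioc (0:ℝ) t₀, HasDerivWithinAt f (f' t) (Set.Icc 0 t₀) t)
    (hf'cont : ContinuousOn f' (Set.Ioc 0 t₀)) :
    0 ≤ ∫ s in (0:ℝ)..t₀, nubar ν (t₀ - s) * f' s := by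
  obtain ⟨ht₀pos, ht₀T⟩ := ht₀
  haveI : SigmaFinite ν := levy_sigmaFinite hν
  rw [intervalIntegral.integral_of_le ht₀pos.le, integral_Ioc_eq_integral_Ioo]
  by_cases hInt : IntegrableOn (fun s => nubar ν (t₀ - s) * f' s) (Set.Ioo 0 t₀) volume
  swap
  · rw [integral_undef hInt]
  set μ := volume.restrict (Set.Ioo (0:ℝ) t₀) with hμ
  set F : ℝ × ℝ → ℝ := fun p => Set.indicator (Set.Ioi (t₀ - p.1)) (fun _ => f' p.1) p.2
    with hF
  -- measurability
  have hf'me : AEMeasurable f' μ := by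
    refine AEMeasurable.mono_measure ?_ (Measure.restrict_mono Set.Ioo_subset_Ioc_self le_rfl)
    exact hf'cont.aemeasurable measurableSet_Ioc
  have hFme : AEStronglyMeasurable F (μ.prod ν) := by
    have h1 : AEMeasurable (fun p : ℝ × ℝ => f' p.1) (μ.prod ν) :=
      hf'me.comp_quasiMeasurePreserving Measure.quasiMeasurePreserving_fst
    have hset : MeasurableSet {p : ℝ × ℝ | t₀ - p.1 < p.2} :=
      measurableSet_lt (by measurability) (by measurability)
    have hFeq : F = Set.indicator {p : ℝ × ℝ | t₀ - p.1 < p.2} (fun p => f' p.1) := by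
      ext p
      by_cases hp : t₀ - p.1 < p.2
      · simp [hF, Set.indicator_of_mem, hp, Set.mem_Ioi]
      · simp [hF, Set.indicator_of_notMem, hp, Set.mem_Ioi]
    rw [hFeq]
    exact (h1.indicator hset).aestronglyMeasurable
  -- finiteness of ν (Ioi (t₀ - s)) for s in Ioo 0 t₀
  have hfin : ∀ s ∈ Set.Ioo (0:ℝ) t₀, ν (Set.Ioi (t₀ - s)) ≠ ⊤ := fun s hs =>
    (levy_tail_lt_top hν (by simp [sub_pos, hs.2])).ne
  -- integrability of F on product
  have hFint : Integrable F (μ.prod ν) := by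
    refine ⟨hFme, ?_⟩
    have heq : ∀ᵐ s ∂μ, (∫⁻ r, (‖F (s, r)‖₊ : ℝ≥0∞) ∂ν)
        = (‖nubar ν (t₀ - s) * f' s‖₊ : ℝ≥0∞) := by
      filter_upwards [ae_restrict_mem measurableSet_Ioo] with s hs
      have h1 : ∀ r, (‖F (s, r)‖₊ : ℝ≥0∞)
          = Set.indicator (Set.Ioi (t₀ - s)) (fun _ => (‖f' s‖₊ : ℝ≥0∞)) r := by
        intro r
        by_cases hr : r ∈ Set.Ioi (t₀ - s) <;>
          simp [hF, Set.indicator_of_mem, Set.indicator_of_notMem, hr]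
      have h2 : (‖nubar ν (t₀ - s) * f' s‖₊ : ℝ≥0∞) = ν (Set.Ioi (t₀ - s)) * ‖f' s‖₊ := by
        simp only [nubar]
        have hcoe : ∀ x : ℝ, ENNReal.ofReal ‖x‖ = (‖x‖₊ : ℝ≥0∞) := fun x => ofReal_norm x
        rw [← hcoe, norm_mul, ENNReal.ofReal_mul (norm_nonneg _),
          Real.norm_of_nonneg ENNReal.toReal_nonneg, ENNReal.ofReal_toReal (hfin s hs),
          hcoe]
      simp_rw [h1]
      rw [lintegral_indicator measurableSet_Ioi, setLIntegral_const, h2, mul_comm]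
    have goal_eq : (∫⁻ p, (‖F p‖₊ : ℝ≥0∞) ∂(μ.prod ν))
        = ∫⁻ s, (‖nubar ν (t₀ - s) * f' s‖₊ : ℝ≥0∞) ∂μ := by
      rw [lintegral_prod (fun p => (‖F p‖₊ : ℝ≥0∞)) hFme.enorm]
      exact lintegral_congr_ae heq
    have h2 : (∫⁻ s, (‖nubar ν (t₀ - s) * f' s‖₊ : ℝ≥0∞) ∂μ) < ⊤ := hInt.2
    exact lt_of_eq_of_lt goal_eq h2
  -- interval integrability of f'
  have hii : IntervalIntegrable f' volume 0 t₀ :=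
    (hf'int.mono_set (by rw [Set.uIcc_of_le ht₀pos.le])).intervalIntegrable
  -- Step A: inner integral in r
  have hA : ∀ᵐ s ∂μ, nubar ν (t₀ - s) * f' s = ∫ r, F (s, r) ∂ν := by
    filter_upwards [ae_restrict_mem measurableSet_Ioo] with s _
    rw [show (fun r => F (s, r)) = Set.indicator (Set.Ioi (t₀ - s)) (fun _ => f' s) from rfl]
    rw [integral_indicator_const (f' s) measurableSet_Ioi, smul_eq_mul]
    rfl
  -- Step D: nonnegativity of the swapped integral
  have hD : 0 ≤ ∫ r, ∫ s, F (s, r) ∂μ ∂ν := by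
    refine integral_nonneg_of_ae ?_
    have hae : ∀ᵐ r ∂ν, 0 < r := by
      rw [ae_iff]
      simpa [not_lt, Set.Iic_def] using hν.1
    filter_upwards [hae] with r hr
    set a := max (t₀ - r) 0 with ha
    have ha0 : 0 ≤ a := le_max_right _ _
    have hat : a < t₀ := max_lt (by linarith) ht₀pos
    have hfun : (fun s => F (s, r)) = Set.indicator (Set.Ioi (t₀ - r)) f' := by
      ext s
      simp [hF, Set.indicator_apply, Set.mem_Ioi, sub_lt_comm]
    have hstep : ∫ s, F (s, r) ∂μ = ∫ s in a..t₀, f' s := by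
      rw [hfun, integral_indicator measurableSet_Ioi, hμ,
        Measure.restrict_restrict measurableSet_Ioi, Set.Ioi_inter_Ioo,
        intervalIntegral.integral_of_le hat.le, integral_Ioc_eq_integral_Ioo]
    rw [Pi.zero_apply, hstep]
    have hiia : IntervalIntegrable f' volume 0 a :=
      (hf'int.mono_set (by
        rw [Set.uIcc_of_le ha0]
        exact Set.Icc_subset_Icc le_rfl hat.le)).intervalIntegrable
    have key : ∫ s in a..t₀, f' s = f t₀ - f a := by
      calc ∫ s in a..t₀, f' s = (∫ s in (0:ℝ)..t₀, f' s) - ∫ s in (0:ℝ)..a, f' s :=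
            (intervalIntegral.integral_interval_sub_left hii hiia).symm
        _ = f t₀ - f a := by
            rw [hfAC t₀ ⟨ht₀pos.le, le_rfl⟩, hfAC a ⟨ha0, hat.le⟩]; ring
    rw [key, sub_nonneg]
    exact hmax a ⟨ha0, hat.le.trans ht₀T⟩
  calc (0:ℝ) ≤ ∫ r, ∫ s, F (s, r) ∂μ ∂ν := hD
    _ = ∫ s, ∫ r, F (s, r) ∂ν ∂μ := (integral_integral_swap hFint).symm
    _ = ∫ s in Set.Ioo 0 t₀, nubar ν (t₀ - s) * f' s := (integral_congr_ae hA).symm
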